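/- Let z0 lie in the upper half-plane H with Re(z0) = 0. Then the value range V_𝓘(z0) = {f(z0) : f ∈ 𝓘} equals the vertical ray {z0 + i·t : t ∈ [0,∞)}. -/

import Mathlib

open Complex Set Filter Topology

noncomputable section

/-- The upper half-plane. -/
def UHP : Set ℂ := {z : ℂ | 0 < z.im}

/-- Hydrodynamic normalization at infinity: there is `c ≥ 0` (the half-plane capacity)
such that `z * (f z - z) → -c` as `|z| → ∞` within each sector `{Im z ≥ ε * |z|}`. -/
def HydroNorm (f : ℂ → ℂ) : Prop :=
  ∃ c : ℝ, 0 ≤ c ∧ ∀ ε : ℝ, 0 < ε →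
    Tendsto (fun z : ℂ => z * (f z - z))
      (comap (fun z : ℂ => ‖z‖) atTop ⊓ 𝓟 {z : ℂ | ε * ‖z‖ ≤ z.im})
      (𝓝 (-(c : ℂ)))

/-- The class `𝓗` of univalent self-maps of the upper half-plane with
hydrodynamic normalization. -/
def ClassH (f : ℂ → ℂ) : Prop :=
  DifferentiableOn ℂ f UHP ∧ InjOn f UHP ∧ MapsTo f UHP UHP ∧ HydroNorm f

/-- The class `𝓘` of maps in `𝓗` symmetric w.r.t. the imaginary axis. -/
def ClassI (f : ℂ → ℂ) : Prop :=
  ClassH f ∧ ∀ z ∈ UHP, f (-(starRingEnd ℂ) z) = -(starRingEnd ℂ) (f z)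

/-- The value range `V_𝓘(z0)`. -/
def VI (z0 : ℂ) : Set ℂ := {w : ℂ | ∃ f : ℂ → ℂ, ClassI f ∧ f z0 = w}


def Sqrt (w : ℂ) : ℂ := Complex.exp (Complex.log w / 2)

lemma sq_Sqrt {w : ℂ} (hw : w ≠ 0) : Sqrt w ^ 2 = w := by
  rw [Sqrt, sq, ← Complex.exp_add, add_halves, Complex.exp_log hw]

lemma Sqrt_re_pos {w : ℂ} (hw : w ∈ Complex.slitPlane) : 0 < (Sqrt w).re := by
  rw [Sqrt, Complex.exp_re]
  apply mul_pos (Real.exp_pos _)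
  apply Real.cos_pos_of_mem_Ioo
  have h1 : (Complex.log w / 2).im = w.arg / 2 := by
    rw [Complex.div_im]; simp [Complex.log_im, Complex.log_re]; ring
  rw [h1]
  have h2 := Complex.neg_pi_lt_arg w
  have h3 : w.arg ≠ Real.pi := Complex.slitPlane_arg_ne_pi hw
  have h4 : w.arg < Real.pi := lt_of_le_of_ne (le_of_abs_le (Complex.abs_arg_le_pi w)) h3
  constructor <;> [skip; skip] <;> linarith

lemma Sqrt_conj {w : ℂ} (hw : w ∈ Complex.slitPlane) :
    Sqrt ((starRingEnd ℂ) w) = (starRingEnd ℂ) (Sqrt w) := by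
  rw [Sqrt, Sqrt, Complex.log_conj _ (Complex.slitPlane_arg_ne_pi hw), ← Complex.exp_conj]
  rw [map_div₀, Complex.conj_ofNat]

lemma Sqrt_one : Sqrt 1 = 1 := by simp [Sqrt]

lemma continuousAt_Sqrt {w : ℂ} (hw : w ∈ Complex.slitPlane) : ContinuousAt Sqrt w := by
  exact Complex.continuous_exp.continuousAt.comp
    (((continuousAt_clog hw).div_const 2))

lemma Sqrt_sq_pos {r : ℝ} (hr : 0 < r) : Sqrt (((r : ℂ))^2) = r := by
  rw [Sqrt]
  rw [← Complex.ofReal_pow, ← Complex.ofReal_log (by positivity)]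
  rw [Real.log_pow]
  push_cast
  rw [show (2:ℂ) * Real.log r / 2 = (Real.log r : ℂ) by ring]
  rw [← Complex.ofReal_exp, Real.exp_log hr]


def Fs (s : ℝ) (z : ℂ) : ℂ := Complex.I * Sqrt ((s : ℂ) - z ^ 2)

lemma sub_sq_mem_slit {s : ℝ} (hs : 0 ≤ s) {z : ℂ} (hz : z ∈ UHP) :
    (s : ℂ) - z ^ 2 ∈ Complex.slitPlane := by
  have hy : 0 < z.im := hz
  rw [Complex.mem_slitPlane_iff]
  rcases eq_or_ne z.re 0 with h | h
  · left
    simp [Complex.sub_re, Complex.ofReal_re, pow_two, Complex.mul_re, h]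
    nlinarith
  · right
    simp [Complex.sub_im, pow_two, Complex.mul_im, h]
    intro hc
    have : z.re * z.im = 0 := by linarith
    rcases mul_eq_zero.1 this with h1 | h1
    · exact h h1
    · exact absurd h1 (ne_of_gt hy)

lemma Fs_im_pos {s : ℝ} (hs : 0 ≤ s) {z : ℂ} (hz : z ∈ UHP) : 0 < (Fs s z).im := by
  have := Sqrt_re_pos (sub_sq_mem_slit hs hz)
  simpa [Fs, Complex.mul_im] using this

lemma Fs_sq {s : ℝ} (hs : 0 ≤ s) {z : ℂ} (hz : z ∈ UHP) : (Fs s z) ^ 2 = z ^ 2 - s := by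
  have hne : (s : ℂ) - z ^ 2 ≠ 0 := Complex.slitPlane_ne_zero (sub_sq_mem_slit hs hz)
  have := sq_Sqrt hne
  rw [Fs, mul_pow, Complex.I_sq, this]
  ring

lemma Fs_diff {s : ℝ} (hs : 0 ≤ s) : DifferentiableOn ℂ (Fs s) UHP := by
  intro z hz
  apply DifferentiableAt.differentiableWithinAt
  apply DifferentiableAt.const_mul
  apply DifferentiableAt.cexp
  apply DifferentiableAt.div_const
  exact (differentiableAt_log (sub_sq_mem_slit hs hz)).comp z (f := fun y : ℂ => (s:ℂ) - y ^ 2)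
    (by apply DifferentiableAt.sub <;> fun_prop)

lemma Fs_inj {s : ℝ} (hs : 0 ≤ s) : InjOn (Fs s) UHP := by
  intro z hz w hw h
  have h1 : z ^ 2 = w ^ 2 := by
    have := Fs_sq hs hz
    have h2 := Fs_sq hs hw
    rw [h] at this
    have h3 := this.symm.trans h2
    linear_combination h3
  have : (z - w) * (z + w) = 0 := by linear_combination h1
  rcases mul_eq_zero.1 this with h2 | h2
  · exact sub_eq_zero.1 h2
  · exfalso
    have : z = -w := by linear_combination h2
    have hz' : 0 < z.im := hz
    have hw' : 0 < w.im := hw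
    rw [this] at hz'
    simp at hz'
    linarith

lemma Fs_symm {s : ℝ} (hs : 0 ≤ s) {z : ℂ} (hz : z ∈ UHP) :
    Fs s (-(starRingEnd ℂ) z) = -(starRingEnd ℂ) (Fs s z) := by
  have h1 : (s : ℂ) - (-(starRingEnd ℂ) z) ^ 2 = (starRingEnd ℂ) ((s : ℂ) - z ^ 2) := by
    rw [map_sub, map_pow, Complex.conj_ofReal]; ring
  rw [Fs, h1, Sqrt_conj (sub_sq_mem_slit hs hz), Fs]
  rw [map_mul, Complex.conj_I]
  ring


lemma Fs_hydro {s : ℝ} (hs : 0 ≤ s) : HydroNorm (Fs s) := by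
  refine ⟨s / 2, by linarith, fun ε hε => ?_⟩
  set l : Filter ℂ :=
    comap (fun z : ℂ => ‖z‖) atTop ⊓ 𝓟 {z : ℂ | ε * ‖z‖ ≤ z.im} with hl
  set q : ℂ → ℂ := fun z => Sqrt (1 - (s : ℂ) / z ^ 2) with hqdef
  have habs : Tendsto (fun z : ℂ => ‖z‖) l atTop :=
    tendsto_comap.mono_left inf_le_left
  have hbig : ∀ᶠ z in l, 1 ≤ ‖z‖ := habs.eventually (eventually_ge_atTop 1)
  have hsec : ∀ᶠ z in l, ε * ‖z‖ ≤ z.im :=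
    le_trans inf_le_right (le_principal_iff.2 (mem_principal_self _)) (mem_principal_self _)
  -- s / z^2 → 0
  have hinv : Tendsto (fun z : ℂ => (s : ℂ) / z ^ 2) l (𝓝 0) := by
    rw [tendsto_zero_iff_norm_tendsto_zero]
    have h1 : Tendsto (fun z : ℂ => ‖(s:ℂ)‖ / ‖z‖ ^ 2) l (𝓝 0) := by
      apply Tendsto.div_atTop tendsto_const_nhds
      exact (tendsto_pow_atTop two_ne_zero).comp habs
    refine h1.congr fun z => ?_
    simp [norm_div, norm_pow]
  have hw1 : Tendsto (fun z : ℂ => 1 - (s : ℂ) / z ^ 2) l (𝓝 1) := by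
    have := (tendsto_const_nhds (x := (1:ℂ)) (f := l)).sub hinv
    simpa using this
  have hq1 : Tendsto q l (𝓝 1) := by
    have hc : ContinuousAt Sqrt 1 := continuousAt_Sqrt Complex.one_mem_slitPlane
    have := hc.tendsto.comp hw1
    rwa [Sqrt_one] at this
  have hqclose : ∀ᶠ z in l, dist (q z) 1 < min (ε / 2) 1 := by
    have : 0 < min (ε / 2) 1 := by positivity
    exact hq1 (Metric.ball_mem_nhds _ this)
  have hkey : ∀ᶠ z in l, z * (Fs s z - z) = -(s : ℂ) / (q z + 1) := by
    filter_upwards [hbig, hsec, hqclose] with z h1 h2 h3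
    have hzim : 0 < z.im := lt_of_lt_of_le (by nlinarith) h2
    have hzU : z ∈ UHP := hzim
    have hz0 : z ≠ 0 := by
      intro h; rw [h] at hzim; simp at hzim
    have hz2 : z ^ 2 ≠ 0 := pow_ne_zero _ hz0
    have hune : (s : ℂ) - z ^ 2 ≠ 0 := Complex.slitPlane_ne_zero (sub_sq_mem_slit hs hzU)
    have hwne : 1 - (s : ℂ) / z ^ 2 ≠ 0 := by
      intro h
      apply hune
      have := sub_eq_zero.1 h
      field_simp at this ⊢
      linear_combination -this
    have hq2 : q z ^ 2 = 1 - (s : ℂ) / z ^ 2 := sq_Sqrt hwne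
    have hFsq : Fs s z ^ 2 = (z * q z) ^ 2 := by
      rw [Fs_sq hs hzU, mul_pow, hq2]
      field_simp
    have hdq1 : ‖q z - 1‖ < min (ε / 2) 1 := by
      rwa [Complex.dist_eq] at h3
    have hzq_im : 0 < (z * q z).im := by
      have he : z * q z = z + z * (q z - 1) := by ring
      have h4 : |(z * (q z - 1)).im| ≤ ‖z‖ * ‖q z - 1‖ := by
        rw [← norm_mul]
        exact Complex.abs_im_le_norm _
      have h5 : ‖z‖ * ‖q z - 1‖ ≤ ‖z‖ * (ε / 2) := by
        apply mul_le_mul_of_nonneg_left (le_of_lt (lt_of_lt_of_le hdq1 (min_le_left _ _)))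
          (norm_nonneg z)
      have h6 : ‖z‖ * (ε / 2) ≤ z.im / 2 := by linarith
      rw [he, Complex.add_im]
      have := abs_le.1 h4
      linarith
    have hFim : 0 < (Fs s z).im := Fs_im_pos hs hzU
    have hFeq : Fs s z = z * q z := by
      have hfac : (Fs s z - z * q z) * (Fs s z + z * q z) = 0 := by
        linear_combination hFsq
      rcases mul_eq_zero.1 hfac with h4 | h4
      · exact sub_eq_zero.1 h4
      · exfalso
        have h5 : Fs s z = -(z * q z) := by linear_combination h4
        have h6 : (Fs s z).im = -((z * q z).im) := by rw [h5, Complex.neg_im]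
        linarith
    have hqne : q z + 1 ≠ 0 := by
      intro h
      have : q z = -1 := by linear_combination h
      rw [this] at hdq1
      have : ‖(-1 - 1 : ℂ)‖ = 2 := by norm_num
      rw [this] at hdq1
      have := min_le_right (ε / 2) 1
      linarith [lt_of_lt_of_le hdq1 (min_le_right (ε/2) 1)]
    rw [hFeq, eq_div_iff hqne]
    field_simp at hq2
    linear_combination hq2
  have hlim : Tendsto (fun z : ℂ => -(s : ℂ) / (q z + 1)) l (𝓝 (-(↑(s / 2) : ℂ))) := by
    have h2 : Tendsto (fun z : ℂ => q z + 1) l (𝓝 2) := by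
      have := hq1.add (tendsto_const_nhds (x := (1:ℂ)))
      norm_num at this
      exact this
    have := (tendsto_const_nhds (x := -(s:ℂ)) (f := l)).div h2 two_ne_zero
    convert this using 2
    · rfl
    push_cast
    ring
  exact hlim.congr' (hkey.mono fun z hz => hz.symm)

-- Cayley-type maps
def Cay (b : ℝ) (z : ℂ) : ℂ := (z - Complex.I * b) / (z + Complex.I * b)

def CayInv (b : ℝ) (w : ℂ) : ℂ := Complex.I * b * (1 + w) / (1 - w)

lemma denom_ne {b : ℝ} (hb : 0 < b) {z : ℂ} (hz : z ∈ UHP) : z + Complex.I * b ≠ 0 := by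
  intro h
  have : (z + Complex.I * (b:ℂ)).im = z.im + b := by simp
  rw [h] at this
  simp at this
  have hz' : 0 < z.im := hz
  linarith

lemma Cay_mem_ball {b : ℝ} (hb : 0 < b) {z : ℂ} (hz : z ∈ UHP) :
    Cay b z ∈ Metric.ball (0 : ℂ) 1 := by
  have hz' : 0 < z.im := hz
  have hd := denom_ne hb hz
  have h1 : ‖z - Complex.I * b‖ < ‖z + Complex.I * b‖ := by
    have hsq : ‖z - Complex.I * b‖ ^ 2 < ‖z + Complex.I * b‖ ^ 2 := by
      rw [Complex.sq_norm, Complex.sq_norm, Complex.normSq_apply, Complex.normSq_apply]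
      simp
      nlinarith
    exact lt_of_pow_lt_pow_left₀ 2 (norm_nonneg _) hsq
  rw [Metric.mem_ball, dist_zero_right, Cay, norm_div]
  rw [div_lt_one (lt_of_le_of_lt (norm_nonneg _) h1)]
  exact h1

lemma one_sub_ne {w : ℂ} (hw : w ∈ Metric.ball (0 : ℂ) 1) : 1 - w ≠ 0 := by
  intro h
  have : w = 1 := by linear_combination -h
  rw [this] at hw
  simp at hw

lemma CayInv_mem_UHP {b : ℝ} (hb : 0 < b) {w : ℂ} (hw : w ∈ Metric.ball (0 : ℂ) 1) :
    CayInv b w ∈ UHP := by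
  have h1 : Complex.normSq w < 1 := by
    rw [Metric.mem_ball, dist_zero_right] at hw
    rw [← Complex.sq_norm]
    nlinarith [norm_nonneg w]
  have hd := one_sub_ne hw
  show 0 < (CayInv b w).im
  rw [CayInv, Complex.div_im, div_sub_div_same]
  apply div_pos
  · simp only [Complex.mul_im, Complex.mul_re, Complex.sub_re, Complex.sub_im, Complex.add_re,
      Complex.add_im, Complex.I_re, Complex.I_im, Complex.ofReal_re, Complex.ofReal_im,
      Complex.one_re, Complex.one_im]
    rw [Complex.normSq_apply] at h1
    nlinarith
  · rwa [Complex.normSq_pos]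

lemma CayInv_Cay {b : ℝ} (hb : 0 < b) {z : ℂ} (hz : z ∈ UHP) : CayInv b (Cay b z) = z := by
  have hd := denom_ne hb hz
  rw [CayInv, Cay]
  have h2 : 1 - (z - Complex.I * b) / (z + Complex.I * b) =
      2 * Complex.I * b / (z + Complex.I * b) := by
    field_simp
    ring
  rw [h2]
  have h3 : 1 + (z - Complex.I * b) / (z + Complex.I * b) = 2 * z / (z + Complex.I * b) := by
    field_simp
    ring
  rw [h3]
  have hb' : (b : ℂ) ≠ 0 := by
    simp [Complex.ext_iff]
    linarith
  field_simp

lemma Cay_I_mul {b c : ℝ} (hb : 0 < b) (hc : 0 < c) :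
    Cay b (Complex.I * c) = (((c - b) / (c + b) : ℝ) : ℂ) := by
  rw [Cay]
  have h1 : Complex.I * (c:ℂ) - Complex.I * b = Complex.I * ((c : ℂ) - b) := by ring
  have h2 : Complex.I * (c:ℂ) + Complex.I * b = Complex.I * ((c : ℂ) + b) := by ring
  rw [h1, h2, mul_div_mul_left _ _ Complex.I_ne_zero]
  push_cast
  ring

lemma CayInv_diff (b : ℝ) : DifferentiableOn ℂ (CayInv b) (Metric.ball (0:ℂ) 1) := by
  intro w hw
  apply DifferentiableAt.differentiableWithinAt
  apply DifferentiableAt.div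
  · fun_prop
  · fun_prop
  · exact one_sub_ne hw

lemma Cay_diff {b : ℝ} (hb : 0 < b) : DifferentiableOn ℂ (Cay b) UHP := by
  intro z hz
  apply DifferentiableAt.differentiableWithinAt
  apply DifferentiableAt.div
  · fun_prop
  · fun_prop
  · exact denom_ne hb hz

lemma CayInv_zero {b : ℝ} : CayInv b 0 = Complex.I * b := by
  simp [CayInv]

lemma Cay_self {b : ℝ} (hb : 0 < b) : Cay b (Complex.I * b) = 0 := by
  rw [Cay_I_mul hb hb]
  simp

lemma schwarz_pick_imag {f : ℂ → ℂ} (hd : DifferentiableOn ℂ f UHP) (hm : MapsTo f UHP UHP)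
    {b b' R R' : ℝ} (hb : 0 < b) (hb' : 0 < b') (hbR : b ≤ R) (hR' : 0 < R')
    (hfb : f (Complex.I * b) = Complex.I * b') (hfR : f (Complex.I * R) = Complex.I * R') :
    b * R' ≤ b' * R := by
  have hR0 : 0 < R := lt_of_lt_of_le hb hbR
  set g : ℂ → ℂ := fun w => Cay b' (f (CayInv b w)) with hg
  have hIb : Complex.I * (b:ℂ) ∈ UHP := by simp [UHP, Set.mem_setOf_eq, hb]
  have hIR : Complex.I * (R:ℂ) ∈ UHP := by simp [UHP, Set.mem_setOf_eq, hR0]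
  have hg0 : g 0 = 0 := by
    rw [hg]
    simp only
    rw [CayInv_zero, hfb, Cay_self hb']
  have hgmaps : MapsTo g (Metric.ball (0:ℂ) 1) (Metric.ball (0:ℂ) 1) := by
    intro w hw
    exact Cay_mem_ball hb' (hm (CayInv_mem_UHP hb hw))
  have hgdiff : DifferentiableOn ℂ g (Metric.ball (0:ℂ) 1) := by
    apply DifferentiableOn.comp (Cay_diff hb')
      (DifferentiableOn.comp hd (CayInv_diff b) (fun w hw => CayInv_mem_UHP hb hw))
    intro w hw
    exact hm (CayInv_mem_UHP hb hw)
  have hwmem : ‖Cay b (Complex.I * R)‖ < 1 := by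
    have := Cay_mem_ball hb hIR
    rwa [Metric.mem_ball, dist_zero_right] at this
  have hschwarz := Complex.norm_le_norm_of_mapsTo_ball hgdiff
    (hgmaps.mono_right Metric.ball_subset_closedBall) hg0 hwmem
  have hgval : g (Cay b (Complex.I * R)) = (((R' - b') / (R' + b') : ℝ) : ℂ) := by
    rw [hg]
    simp only
    rw [CayInv_Cay hb hIR, hfR, Cay_I_mul hb' hR']
  rw [hgval, Cay_I_mul hb hR0] at hschwarz
  simp only [Complex.norm_real, Real.norm_eq_abs, abs_div] at hschwarz
  have hden1 : |R' + b'| = R' + b' := abs_of_pos (by linarith)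
  have hden2 : |R + b| = R + b := abs_of_pos (by linarith)
  have hnum2 : |R - b| = R - b := abs_of_nonneg (by linarith)
  rw [hden1, hden2, hnum2] at hschwarz
  rw [div_le_div_iff₀ (by linarith) (by linarith)] at hschwarz
  rcases le_or_gt b' R' with h | h
  · rw [_root_.abs_of_nonneg (show (0:ℝ) ≤ R' - b' by linarith)] at hschwarz
    nlinarith
  · nlinarith


lemma imaxis_fixed {f : ℂ → ℂ} (hf : ClassI f) {z : ℂ} (hz : z ∈ UHP) (hre : z.re = 0) :
    f z = Complex.I * ((f z).im : ℂ) := by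
  have h1 : -(starRingEnd ℂ) z = z := by
    apply Complex.ext <;> simp [hre]
  have h2 := hf.2 z hz
  rw [h1] at h2
  have h3 : (f z).re = 0 := by
    have := congrArg Complex.re h2
    simp at this
    linarith
  apply Complex.ext <;> simp [h3]

lemma im_le_im {f : ℂ → ℂ} (hf : ClassI f) {z0 : ℂ} (hz0 : z0 ∈ UHP) (hre : z0.re = 0) :
    z0.im ≤ (f z0).im := by
  obtain ⟨⟨hd, hinj, hm, hhydro⟩, hsym⟩ := hf
  set b : ℝ := z0.im with hbdef
  have hb : 0 < b := hz0
  have hz0eq : z0 = Complex.I * (b : ℂ) := by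
    apply Complex.ext <;> simp [hre, hbdef]
  set b' : ℝ := (f z0).im with hb'def
  have hfb' : f (Complex.I * b) = Complex.I * b' := by
    rw [← hz0eq]; exact imaxis_fixed ⟨⟨hd, hinj, hm, hhydro⟩, hsym⟩ hz0 hre
  have hb' : 0 < b' := hm hz0
  -- ρ R
  set ρ : ℝ → ℝ := fun R => (f (Complex.I * R)).im with hρdef
  have hImem : ∀ {R : ℝ}, 0 < R → Complex.I * (R:ℂ) ∈ UHP := by
    intro R hR
    simp [UHP, Set.mem_setOf_eq, hR]
  have hρpos : ∀ {R : ℝ}, 0 < R → 0 < ρ R := fun hR => hm (hImem hR)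
  have hfR : ∀ {R : ℝ}, 0 < R → f (Complex.I * R) = Complex.I * (ρ R : ℂ) := by
    intro R hR
    exact imaxis_fixed ⟨⟨hd, hinj, hm, hhydro⟩, hsym⟩ (hImem hR) (by simp)
  obtain ⟨c, hc0, htend⟩ := hhydro
  have hj : Tendsto (fun R : ℝ => Complex.I * (R:ℂ)) atTop
      (comap (fun z : ℂ => ‖z‖) atTop ⊓
        𝓟 {z : ℂ | (1/2) * ‖z‖ ≤ z.im}) := by
    rw [tendsto_inf]
    constructor
    · rw [tendsto_comap_iff]
      apply tendsto_abs_atTop_atTop.congr'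
      filter_upwards [eventually_ge_atTop (0:ℝ)] with R hR
      simp [Function.comp, _root_.abs_of_nonneg hR]
    · rw [tendsto_principal]
      filter_upwards [eventually_ge_atTop (0:ℝ)] with R hR
      simp only [Set.mem_setOf_eq, Complex.mul_im, Complex.I_re, Complex.I_im,
        Complex.ofReal_re, Complex.ofReal_im, norm_mul, Complex.norm_I, Complex.norm_real, Real.norm_eq_abs,
        one_mul, zero_mul, mul_zero, add_zero, mul_one, zero_add]
      rw [_root_.abs_of_nonneg hR]
      linarith
  have htend2 := (htend (1/2) (by norm_num)).comp hj
  have hIinv : Tendsto (fun R : ℝ => (Complex.I * (R:ℂ))⁻¹) atTop (𝓝 0) := by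
    rw [tendsto_zero_iff_norm_tendsto_zero]
    have h1 : Tendsto (fun R : ℝ => |R|⁻¹) atTop (𝓝 0) :=
      tendsto_inv_atTop_zero.comp tendsto_abs_atTop_atTop
    apply h1.congr'
    filter_upwards [eventually_ge_atTop (1:ℝ)] with R hR
    simp
  have hdiff : Tendsto (fun R : ℝ => f (Complex.I * R) - Complex.I * R) atTop (𝓝 0) := by
    have hmul := hIinv.mul htend2
    rw [zero_mul] at hmul
    apply hmul.congr'
    filter_upwards [eventually_ge_atTop (1:ℝ)] with R hR
    have hne : Complex.I * (R:ℂ) ≠ 0 := by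
      simp [Complex.ext_iff]
      linarith
    simp only [Function.comp_apply]
    rw [← mul_assoc, inv_mul_cancel₀ hne, one_mul]
  have him : Tendsto (fun R : ℝ => ρ R - R) atTop (𝓝 0) := by
    have h1 := (Complex.continuous_im.tendsto 0).comp hdiff
    simp only [Complex.zero_im] at h1
    apply h1.congr
    intro R
    simp [Function.comp, hρdef]
  have hratio : Tendsto (fun R : ℝ => ρ R / R) atTop (𝓝 1) := by
    have h1 : Tendsto (fun R : ℝ => (ρ R - R) * R⁻¹ + 1) atTop (𝓝 1) := by
      have := him.mul (tendsto_inv_atTop_zero)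
      rw [zero_mul] at this
      have := this.add (tendsto_const_nhds (x := (1:ℝ)))
      rwa [zero_add] at this
    apply h1.congr'
    filter_upwards [eventually_ge_atTop (1:ℝ)] with R hR
    have : R ≠ 0 := by linarith
    field_simp
    ring
  have hratio2 : Tendsto (fun R : ℝ => b' * (R / ρ R)) atTop (𝓝 b') := by
    have h1 : Tendsto (fun R : ℝ => (ρ R / R)⁻¹) atTop (𝓝 1) := by
      have := hratio.inv₀ one_ne_zero
      simpa using this
    have h2 : Tendsto (fun R : ℝ => R / ρ R) atTop (𝓝 1) := by
      apply h1.congr'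
      filter_upwards [eventually_ge_atTop (1:ℝ)] with R hR
      rw [inv_div]
    have := (tendsto_const_nhds (x := b')).mul h2
    rwa [mul_one] at this
  have hev : ∀ᶠ R in atTop, b ≤ b' * (R / ρ R) := by
    filter_upwards [eventually_ge_atTop (max b 1)] with R hR
    have hRb : b ≤ R := le_trans (le_max_left _ _) hR
    have hR0 : 0 < R := lt_of_lt_of_le hb hRb
    have hρ := hρpos hR0
    have hkey := schwarz_pick_imag hd hm hb hb' hRb hρ hfb' (hfR hR0)
    rw [mul_div_assoc'] at *
    rw [le_div_iff₀ hρ]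
    linarith [hkey]
  exact ge_of_tendsto hratio2 hev

theorem valueRange_ClassI_imaginary_axis (z0 : ℂ) (hz0 : z0 ∈ UHP) (hre : z0.re = 0) :
    VI z0 = {w : ℂ | ∃ t : ℝ, 0 ≤ t ∧ w = z0 + Complex.I * (t : ℂ)} := by
  ext w
  simp only [VI, Set.mem_setOf_eq]
  constructor
  · rintro ⟨f, hf, rfl⟩
    have hble := im_le_im hf hz0 hre
    have hfix := imaxis_fixed hf hz0 hre
    refine ⟨(f z0).im - z0.im, by linarith, ?_⟩
    have hz0eq : z0 = Complex.I * (z0.im : ℂ) := by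
      apply Complex.ext <;> simp [hre]
    have hfre : (f z0).re = 0 := by rw [hfix]; simp
    apply Complex.ext
    · simp [hfre, hre]
    · simp
  · rintro ⟨t, ht, rfl⟩
    have hb : 0 < z0.im := hz0
    set b : ℝ := z0.im with hbdef
    set s : ℝ := t ^ 2 + 2 * t * b with hsdef
    have hs : 0 ≤ s := by nlinarith
    refine ⟨Fs s, ⟨⟨Fs_diff hs, Fs_inj hs, fun z hz => Fs_im_pos hs hz, Fs_hydro hs⟩,
      fun z hz => Fs_symm hs hz⟩, ?_⟩
    have hz0eq : z0 = Complex.I * (b : ℂ) := by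
      apply Complex.ext <;> simp [hre, hbdef]
    have harg : (s : ℂ) - z0 ^ 2 = (((t + b : ℝ)) : ℂ) ^ 2 := by
      rw [hz0eq, hsdef]
      push_cast
      linear_combination (-(b:ℂ)^2) * Complex.I_sq
    rw [Fs, harg, Sqrt_sq_pos (by linarith : (0:ℝ) < t + b), hz0eq]
    push_cast
    ring
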